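/- Let T(n) = ∑_{m=1}^n (1/2)_m (1/2)_{n−m} / n!. Then 2·T(n+1) − T(n) = (1/2)_n / n! for all n ≥ 0 (with T(0) = 0). -/

import Mathlib

/-- Pochhammer symbol (rising factorial) `(x)_n`. -/
noncomputable def poch (x : ℝ) (n : ℕ) : ℝ := (ascPochhammer ℝ n).eval x

/-- `T(n) = ∑_{m=1}^n (1/2)_m (1/2)_{n−m} / n!`. -/
noncomputable def T (n : ℕ) : ℝ :=
  ∑ m ∈ Finset.Icc 1 n, poch (1/2) m * poch (1/2) (n - m) / n.factorial

noncomputable def Sfull (n : ℕ) : ℝ :=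
  ∑ m ∈ Finset.range (n+1), poch (1/2) m * poch (1/2) (n - m)

lemma poch_zero (x : ℝ) : poch x 0 = 1 := by simp [poch]

lemma poch_succ (x : ℝ) (n : ℕ) : poch x (n+1) = (x + n) * poch x n := by
  simp [poch, ascPochhammer_succ_right]
  ring

lemma T_eq (n : ℕ) : T n = (Sfull n - poch (1/2) n) / n.factorial := by
  have h : Sfull n = poch (1/2) n + ∑ m ∈ Finset.Icc 1 n,
      poch (1/2) m * poch (1/2) (n - m) := by
    rw [Sfull, Finset.range_eq_Ico,
      Finset.sum_eq_sum_Ico_succ_bot (Nat.succ_pos n), Nat.succ_eq_add_one, Finset.Ico_add_one_right_eq_Icc]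
    simp [poch_zero]
  rw [T, h]
  rw [← Finset.sum_div]
  ring

lemma key (n : ℕ) :
    2 * Sfull (n+1) = 2 * poch (1/2) (n+1) + (n+1) * Sfull n := by
  have h1 : Sfull (n+1) = poch (1/2) (n+1) +
      ∑ j ∈ Finset.range (n+1), (1/2 + (j:ℝ)) * (poch (1/2) j * poch (1/2) (n - j)) := by
    rw [Sfull, Finset.sum_range_succ']
    simp only [poch_zero, Nat.sub_zero, one_mul]
    rw [add_comm]
    congr 1
    apply Finset.sum_congr rfl
    intro j hj
    have : n + 1 - (j + 1) = n - j := by omega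
    rw [this, poch_succ]
    ring
  have h2 : ∑ j ∈ Finset.range (n+1), (1/2 + (j:ℝ)) * (poch (1/2) j * poch (1/2) (n - j))
      = ∑ j ∈ Finset.range (n+1), (1/2 + ((n - j : ℕ):ℝ)) * (poch (1/2) j * poch (1/2) (n - j)) := by
    rw [← Finset.sum_range_reflect]
    simp only [Nat.add_sub_cancel]
    apply Finset.sum_congr rfl
    intro j hj
    have hjn : j ≤ n := by simpa [Nat.lt_succ_iff] using hj
    have h3 : n - (n - j) = j := by omega
    rw [h3]
    ring
  have h4 : ∑ j ∈ Finset.range (n+1),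
        ((1/2 + (j:ℝ)) + (1/2 + ((n - j : ℕ):ℝ))) * (poch (1/2) j * poch (1/2) (n - j))
      = ((n:ℝ)+1) * Sfull n := by
    rw [Sfull, Finset.mul_sum]
    apply Finset.sum_congr rfl
    intro j hj
    have hjn : j ≤ n := by simpa [Nat.lt_succ_iff] using hj
    have : ((n - j : ℕ):ℝ) = (n:ℝ) - (j:ℝ) := by
      rw [Nat.cast_sub hjn]
    rw [this]
    ring
  have h5 : ∑ j ∈ Finset.range (n+1),
        ((1/2 + (j:ℝ)) + (1/2 + ((n - j : ℕ):ℝ))) * (poch (1/2) j * poch (1/2) (n - j))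
      = 2 * ∑ j ∈ Finset.range (n+1), (1/2 + (j:ℝ)) * (poch (1/2) j * poch (1/2) (n - j)) := by
    rw [two_mul]
    nth_rewrite 2 [h2]
    rw [← Finset.sum_add_distrib]
    apply Finset.sum_congr rfl
    intro j _
    ring
  rw [h1]
  rw [mul_add]
  congr 1
  rw [← h5, h4]

theorem stmt8 (n : ℕ) :
    2 * T (n + 1) - T n = poch (1/2) n / n.factorial := by
  rw [T_eq, T_eq]
  have hk := key n
  have hf : (n.factorial : ℝ) ≠ 0 := Nat.cast_ne_zero.mpr n.factorial_ne_zero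
  have hf1 : ((n+1).factorial : ℝ) = ((n:ℝ)+1) * n.factorial := by
    rw [Nat.factorial_succ]
    push_cast
    ring
  have hS : Sfull (n+1) - poch (1/2) (n+1) = ((n:ℝ)+1) * Sfull n / 2 := by
    linarith
  rw [hS, hf1]
  have hn1 : (n:ℝ) + 1 ≠ 0 := by positivity
  field_simp
  ring
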